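/- Suppose the extra data is a single point, i.e. X_ext consists of the single row x_extᵀ, with Π⊥_std x_ext ≠ 0 and x_extᵀ Π⊥_std θ⋆ ≠ 0. If (x_extᵀ Π⊥_std Σ Π⊥_std x_ext)/(x_extᵀ Π⊥_std x_ext) − 2 · ((Π⊥_std x_ext)ᵀ Σ Π⊥_std θ⋆)/(x_extᵀ Π⊥_std θ⋆) ≤ 0, then data augmentation does not increase the standard error: L_std(θ̂_aug) ≤ L_std(θ̂_std). -/

import Mathlib

open Matrix BigOperators

/-- Standard (population) error of `θ` w.r.t. covariance `S` and true parameter `θstar`: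
`(θ − θ⋆)ᵀ Σ (θ − θ⋆)`. -/
def Lstd {d : ℕ} (S : Matrix (Fin d) (Fin d) ℝ) (θstar θ : Fin d → ℝ) : ℝ :=
  (θ - θstar) ⬝ᵥ S.mulVec (θ - θstar)

/-- `θ` is the minimum Euclidean-norm solution of the constraint `C`. -/
def IsMinNormInterp {d : ℕ} (C : (Fin d → ℝ) → Prop) (θ : Fin d → ℝ) : Prop :=
  C θ ∧ ∀ θ', C θ' → θ ⬝ᵥ θ ≤ θ' ⬝ᵥ θ'

/-- `P` is the orthogonal projection matrix onto `Null(X)`: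
symmetric, idempotent, range contained in `Null(X)`, and fixing `Null(X)`. -/
def IsOrthProjNull {n d : ℕ} (X : Matrix (Fin n) (Fin d) ℝ)
    (P : Matrix (Fin d) (Fin d) ℝ) : Prop :=
  Pᵀ = P ∧ P * P = P ∧ (∀ v, X.mulVec (P.mulVec v) = 0) ∧
    (∀ v, X.mulVec v = 0 → P.mulVec v = v)

/-- `P` is the orthogonal projection matrix onto `Null(X1) ∩ Null(X2)`. -/
def IsOrthProjNull2 {n m d : ℕ} (X1 : Matrix (Fin n) (Fin d) ℝ)
    (X2 : Matrix (Fin m) (Fin d) ℝ) (P : Matrix (Fin d) (Fin d) ℝ) : Prop :=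
  Pᵀ = P ∧ P * P = P ∧ (∀ v, X1.mulVec (P.mulVec v) = 0 ∧ X2.mulVec (P.mulVec v) = 0) ∧
    (∀ v, X1.mulVec v = 0 → X2.mulVec v = 0 → P.mulVec v = v)


lemma dp_self_nonneg {d : ℕ} (v : Fin d → ℝ) : 0 ≤ v ⬝ᵥ v := by
  apply Finset.sum_nonneg; intro i _; exact mul_self_nonneg _

lemma minnorm_orth {d : ℕ} {C : (Fin d → ℝ) → Prop} {θ v : Fin d → ℝ}
    (h : C θ ∧ ∀ θ', C θ' → θ ⬝ᵥ θ ≤ θ' ⬝ᵥ θ') (hv : ∀ t : ℝ, C (θ + t • v)) :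
    θ ⬝ᵥ v = 0 := by
  have expand : ∀ t : ℝ, (θ + t • v) ⬝ᵥ (θ + t • v)
      = θ ⬝ᵥ θ + 2 * t * (θ ⬝ᵥ v) + t ^ 2 * (v ⬝ᵥ v) := by
    intro t
    simp [add_dotProduct, dotProduct_add, smul_dotProduct, dotProduct_smul,
      dotProduct_comm v θ]
    ring
  have key : ∀ t : ℝ, 0 ≤ 2 * t * (θ ⬝ᵥ v) + t ^ 2 * (v ⬝ᵥ v) := by
    intro t
    have := h.2 _ (hv t)
    rw [expand t] at this
    linarith
  set a := θ ⬝ᵥ v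
  set b := v ⬝ᵥ v
  have hb : 0 ≤ b := dp_self_nonneg v
  have hb1 : (0:ℝ) < b + 1 := by linarith
  have h1 := key (-(a) / (b + 1))
  have h2 : 0 ≤ (2 * (-a / (b + 1)) * a + (-a / (b + 1)) ^ 2 * b) * (b + 1) ^ 2 :=
    mul_nonneg h1 (by positivity)
  have h3 : (2 * (-a / (b + 1)) * a + (-a / (b + 1)) ^ 2 * b) * (b + 1) ^ 2
      = a ^ 2 * (-b - 2) := by
    field_simp
    ring
  rw [h3] at h2
  nlinarith [sq_nonneg a]

lemma symm_dot {d : ℕ} {M : Matrix (Fin d) (Fin d) ℝ} (hM : Mᵀ = M) (u w : Fin d → ℝ) :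
    M.mulVec u ⬝ᵥ w = u ⬝ᵥ M.mulVec w :=
  calc M.mulVec u ⬝ᵥ w = Matrix.vecMul u Mᵀ ⬝ᵥ w := by rw [Matrix.vecMul_transpose]
    _ = Matrix.vecMul u M ⬝ᵥ w := by rw [hM]
    _ = u ⬝ᵥ M.mulVec w := (Matrix.dotProduct_mulVec u M w).symm

/-- Corollary characterization (a) of the paper: single-point augmentation does not
increase the standard error when the stated ratio condition holds. -/
theorem single_point_ratio_condition_safe {n d : ℕ}
    (Xstd : Matrix (Fin n) (Fin d) ℝ)
    (S : Matrix (Fin d) (Fin d) ℝ) (hS : S.PosSemidef)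
    (Pstd : Matrix (Fin d) (Fin d) ℝ) (hPstd : IsOrthProjNull Xstd Pstd)
    (xext : Fin d → ℝ) (θstar θstd θaug : Fin d → ℝ)
    (hne : Pstd.mulVec xext ≠ 0)
    (hne' : xext ⬝ᵥ Pstd.mulVec θstar ≠ 0)
    (hcond :
      ((Pstd.mulVec xext) ⬝ᵥ S.mulVec (Pstd.mulVec xext)) / (xext ⬝ᵥ Pstd.mulVec xext) -
        2 * (((Pstd.mulVec xext) ⬝ᵥ S.mulVec (Pstd.mulVec θstar)) /
          (xext ⬝ᵥ Pstd.mulVec θstar)) ≤ 0)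
    (hstd : IsMinNormInterp (fun θ => Xstd.mulVec θ = Xstd.mulVec θstar) θstd)
    (haug : IsMinNormInterp
      (fun θ => Xstd.mulVec θ = Xstd.mulVec θstar ∧ xext ⬝ᵥ θ = xext ⬝ᵥ θstar) θaug) :
    Lstd S θstar θaug ≤ Lstd S θstar θstd := by
  obtain ⟨hPT, hPP, hPnull, hPfix⟩ := hPstd
  have hSsym : Sᵀ = S := by
    have := hS.1
    simpa [Matrix.IsHermitian] using this
  set p := Pstd.mulVec θstar with hp
  set q := Pstd.mulVec xext with hq
  set α := xext ⬝ᵥ p with hα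
  set β := xext ⬝ᵥ q with hβ
  -- basic facts
  have hXp : Xstd.mulVec p = 0 := hPnull θstar
  have hXq : Xstd.mulVec q = 0 := hPnull xext
  have hPq : Pstd.mulVec q = q := by
    rw [hq, Matrix.mulVec_mulVec, hPP]
  have hβqq : β = q ⬝ᵥ q := by
    calc β = xext ⬝ᵥ Pstd.mulVec q := by rw [hPq]
      _ = Pstd.mulVec xext ⬝ᵥ q := (symm_dot hPT xext q).symm
      _ = q ⬝ᵥ q := rfl
  have hβpos : 0 < β := by
    rcases lt_or_eq_of_le (dp_self_nonneg q) with h | h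
    · rw [hβqq]; exact h
    · exact absurd (dotProduct_self_eq_zero.mp h.symm) hne
  -- orthogonality for p-ish vectors
  have hpv : ∀ v, Xstd.mulVec v = 0 → p ⬝ᵥ v = θstar ⬝ᵥ v := by
    intro v hv
    calc p ⬝ᵥ v = θstar ⬝ᵥ Pstd.mulVec v := symm_dot hPT θstar v
      _ = θstar ⬝ᵥ v := by rw [hPfix v hv]
  have hqv : ∀ v, Xstd.mulVec v = 0 → q ⬝ᵥ v = xext ⬝ᵥ v := by
    intro v hv
    calc q ⬝ᵥ v = xext ⬝ᵥ Pstd.mulVec v := symm_dot hPT xext v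
      _ = xext ⬝ᵥ v := by rw [hPfix v hv]
  -- characterize θstd
  have hostd : ∀ v, Xstd.mulVec v = 0 → θstd ⬝ᵥ v = 0 := by
    intro v hv
    refine minnorm_orth (C := fun θ' => Xstd.mulVec θ' = Xstd.mulVec θstar) hstd (fun t => ?_)
    simp [Matrix.mulVec_add, Matrix.mulVec_smul, hv, hstd.1]
  have hθstd : θstd = θstar - p := by
    set u := θstd - (θstar - p) with hu
    have hXu : Xstd.mulVec u = 0 := by
      simp [hu, Matrix.mulVec_sub, hXp, hstd.1]
    have h1 : θstd ⬝ᵥ u = 0 := hostd u hXu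
    have h2 : (θstar - p) ⬝ᵥ u = 0 := by
      have := hpv u hXu
      simp [sub_dotProduct, this]
    have huu : u ⬝ᵥ u = 0 := by
      have : u ⬝ᵥ u = θstd ⬝ᵥ u - (θstar - p) ⬝ᵥ u := by
        simp [hu, sub_dotProduct, dotProduct_sub, dotProduct_comm]
      rw [this, h1, h2, sub_zero]
    exact sub_eq_zero.mp (dotProduct_self_eq_zero.mp huu)
  -- characterize θaug
  set c : ℝ := α / β with hc
  have hcβ : c * β = α := by rw [hc, div_mul_cancel₀ α hβpos.ne']
  have hoaug : ∀ v, Xstd.mulVec v = 0 → xext ⬝ᵥ v = 0 → θaug ⬝ᵥ v = 0 := by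
    intro v hv hxv
    refine minnorm_orth (C := fun θ' => Xstd.mulVec θ' = Xstd.mulVec θstar ∧ xext ⬝ᵥ θ' = xext ⬝ᵥ θstar) haug (fun t => ?_)
    constructor
    · simp [Matrix.mulVec_add, Matrix.mulVec_smul, hv, haug.1.1]
    · simp [dotProduct_add, dotProduct_smul, hxv, haug.1.2]
  have hθaug : θaug = θstar - p + c • q := by
    set u := θaug - (θstar - p + c • q) with hu
    have hXu : Xstd.mulVec u = 0 := by
      simp [hu, Matrix.mulVec_sub, Matrix.mulVec_add, Matrix.mulVec_smul, hXp, hXq,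
        haug.1.1]
    have hxu : xext ⬝ᵥ u = 0 := by
      have : xext ⬝ᵥ (θstar - p + c • q) = xext ⬝ᵥ θstar - α + c * β := by
        simp [dotProduct_sub, dotProduct_add, dotProduct_smul, hα, hβ]
      simp [hu, dotProduct_sub, this, hcβ, haug.1.2]
    have h1 : θaug ⬝ᵥ u = 0 := hoaug u hXu hxu
    have h2 : (θstar - p + c • q) ⬝ᵥ u = 0 := by
      have hqu : q ⬝ᵥ u = 0 := by rw [hqv u hXu, hxu]
      have hpu := hpv u hXu
      simp [add_dotProduct, sub_dotProduct, smul_dotProduct, hpu, hqu]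
    have huu : u ⬝ᵥ u = 0 := by
      have : u ⬝ᵥ u = θaug ⬝ᵥ u - (θstar - p + c • q) ⬝ᵥ u := by
        simp [hu, sub_dotProduct, dotProduct_sub, dotProduct_add, dotProduct_smul,
          dotProduct_comm]
      rw [this, h1, h2, sub_zero]
    have h0 : θaug - (θstar - p + c • q) = 0 := dotProduct_self_eq_zero.mp huu
    have := sub_eq_zero.mp h0
    exact this
  -- compute the two errors
  set A := q ⬝ᵥ S.mulVec q with hA
  set B := q ⬝ᵥ S.mulVec p with hB
  have hpSq : p ⬝ᵥ S.mulVec q = B := by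
    rw [hB, ← symm_dot hSsym q p, dotProduct_comm]
  have hstdL : Lstd S θstar θstd = p ⬝ᵥ S.mulVec p := by
    rw [Lstd, hθstd]
    have h1 : θstar - p - θstar = -p := by ring
    rw [h1]
    simp [Matrix.mulVec_neg, neg_dotProduct, dotProduct_neg]
  have haugL : Lstd S θstar θaug = p ⬝ᵥ S.mulVec p + c ^ 2 * A - 2 * c * B := by
    rw [Lstd, hθaug]
    have h1 : θstar - p + c • q - θstar = c • q - p := by ring
    rw [h1]
    simp only [Matrix.mulVec_sub, Matrix.mulVec_smul, sub_dotProduct, smul_dotProduct,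
      dotProduct_sub, dotProduct_smul, smul_eq_mul]
    rw [hpSq]
    ring
  rw [hstdL, haugL]
  -- final arithmetic
  have hcond' : A / β - 2 * (B / α) ≤ 0 := hcond
  have hkey : c ^ 2 * A - 2 * c * B = (α ^ 2 / β) * (A / β - 2 * (B / α)) := by
    rw [hc]; field_simp [hβpos.ne']
  have hnn : 0 ≤ α ^ 2 / β := by positivity
  nlinarith [mul_nonpos_of_nonneg_of_nonpos hnn hcond']
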